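/- arXiv:1805.12464 — 2 statements merged into one kernel-verified Lean document; each statement's English description precedes it below -/
import Mathlib

section
/- For any letters a, b in the alphabet A and any nonempty word v in the noncommutative polynomial algebra k⟨A⟩ equipped with the quasi-shuffle product * (defined recursively by (aw)*(bv) = a(w*bv) + b(aw*v) + (a⋄b)(w*v), with 1 as unit), one has a⋄(v*b) + b(a⋄v) = (a⋄v)*b + a⋄(bv), where ⋄ denotes the given commutative associative product on the span of letters, extended to act on the first letter of a word. -/
/-!
Quasi-shuffle algebras (Hoffman–Ihara).  We model the span `kA` of the alphabet
(with its commutative associative product `⋄`, written `*` in `L`) as a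
non-unital commutative `k`-algebra `L`, and the word algebra `k⟨A⟩` as the
tensor algebra `TensorAlgebra k L`, in which a word `a₁⋯aₙ` is the product
`ι a₁ * ⋯ * ι aₙ`.
-/

open TensorAlgebra

variable (k : Type*) [Field k]
variable {L : Type*} [NonUnitalCommRing L] [Module k L]
  [SMulCommClass k L L] [IsScalarTower k L L]

/-- The word `a₁⋯aₙ` as an element of the tensor algebra. -/
def word (l : List L) : TensorAlgebra k L := (l.map fun a => TensorAlgebra.ι k a).prod

lemma word_nil : word k ([] : List L) = 1 := rfl

lemma word_cons (c : L) (u : List L) :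
    word k (c :: u) = TensorAlgebra.ι k c * word k u := by
  simp [word]

/-- The span of all words. -/
noncomputable def wordSpan : Submodule k (TensorAlgebra k L) :=
  Submodule.span k (Set.range (word k : List L → TensorAlgebra k L))

lemma word_mem_wordSpan (u : List L) : word k u ∈ wordSpan k :=
  Submodule.subset_span ⟨u, rfl⟩

lemma mul_wordSpan (c : L) {x : TensorAlgebra k L} (hx : x ∈ wordSpan k) :
    TensorAlgebra.ι k c * x ∈ wordSpan k := by
  induction hx using Submodule.span_induction with
  | mem y hy =>
      obtain ⟨u, rfl⟩ := hy
      rw [← word_cons]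
      exact word_mem_wordSpan k _
  | zero => simpa using (wordSpan k (L := L)).zero_mem
  | add y z _ _ hy hz => rw [mul_add]; exact (wordSpan k).add_mem hy hz
  | smul r y _ hy => rw [mul_smul_comm]; exact (wordSpan k).smul_mem r hy

lemma D_mul (D : L → TensorAlgebra k L →ₗ[k] TensorAlgebra k L)
    (hDw : ∀ (a c : L) (u : List L),
      D a (TensorAlgebra.ι k c * word k u) = TensorAlgebra.ι k (a * c) * word k u)
    (a c : L) {x : TensorAlgebra k L} (hx : x ∈ wordSpan k) :
    D a (TensorAlgebra.ι k c * x) = TensorAlgebra.ι k (a * c) * x := by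
  induction hx using Submodule.span_induction with
  | mem y hy => obtain ⟨u, rfl⟩ := hy; exact hDw a c u
  | zero => simp
  | add y z _ _ hy hz => rw [mul_add, map_add, hy, hz, mul_add]
  | smul r y _ hy => rw [mul_smul_comm, map_smul, hy, mul_smul_comm]

lemma m_word_mem (m : TensorAlgebra k L →ₗ[k] TensorAlgebra k L →ₗ[k] TensorAlgebra k L)
    (hmul : ∀ x, m 1 x = x) (hmur : ∀ x, m x 1 = x)
    (hmrec : ∀ (a b : L) (v w : List L),
      m (TensorAlgebra.ι k a * word k v) (TensorAlgebra.ι k b * word k w)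
        = TensorAlgebra.ι k a * m (word k v) (TensorAlgebra.ι k b * word k w)
          + TensorAlgebra.ι k b * m (TensorAlgebra.ι k a * word k v) (word k w)
          + TensorAlgebra.ι k (a * b) * m (word k v) (word k w))
    (b : L) : ∀ (u : List L), m (word k u) (TensorAlgebra.ι k b) ∈ wordSpan k := by
  intro u
  induction u with
  | nil =>
      rw [word_nil, hmul]
      have : TensorAlgebra.ι k b = word k [b] := by simp [word]
      rw [this]; exact word_mem_wordSpan k _
  | cons c u ih =>
      have hb : TensorAlgebra.ι k b = TensorAlgebra.ι k b * word k ([] : List L) := by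
        rw [word_nil, mul_one]
      rw [word_cons, hb, hmrec c b u []]
      rw [word_nil, mul_one, hmur, hmur, ← word_cons]
      refine (wordSpan k).add_mem ((wordSpan k).add_mem ?_ ?_) ?_
      · exact mul_wordSpan k c ih
      · rw [← word_cons]; exact word_mem_wordSpan k _
      · rw [← word_cons]; exact word_mem_wordSpan k _

/--
`m` is the quasi-shuffle product `*` (a `k`-bilinear product on
`k⟨A⟩` with unit `1` satisfying the quasi-shuffle recursion), and `D a` is the
linear operator `a ⋄ -` acting on the first letter of each word (with
`D a 1 = 0`).  Then for letters `a, b` and any nonempty word `v`,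
`a⋄(v*b) + b(a⋄v) = (a⋄v)*b + a⋄(bv)`.
-/
theorem stmt0
    (m : TensorAlgebra k L →ₗ[k] TensorAlgebra k L →ₗ[k] TensorAlgebra k L)
    (hmul : ∀ x, m 1 x = x) (hmur : ∀ x, m x 1 = x)
    (hmrec : ∀ (a b : L) (v w : List L),
      m (TensorAlgebra.ι k a * word k v) (TensorAlgebra.ι k b * word k w)
        = TensorAlgebra.ι k a * m (word k v) (TensorAlgebra.ι k b * word k w)
          + TensorAlgebra.ι k b * m (TensorAlgebra.ι k a * word k v) (word k w)
          + TensorAlgebra.ι k (a * b) * m (word k v) (word k w))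
    (D : L → TensorAlgebra k L →ₗ[k] TensorAlgebra k L)
    (hD1 : ∀ a : L, D a 1 = 0)
    (hDw : ∀ (a c : L) (u : List L),
      D a (TensorAlgebra.ι k c * word k u) = TensorAlgebra.ι k (a * c) * word k u) :
    ∀ (a b : L) (v : List L), v ≠ [] →
      D a (m (word k v) (TensorAlgebra.ι k b)) + TensorAlgebra.ι k b * D a (word k v)
        = m (D a (word k v)) (TensorAlgebra.ι k b) + D a (word k (b :: v)) := by
  intro a b v hv
  obtain ⟨c, u, rfl⟩ : ∃ c u, v = c :: u := by
    cases v with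
    | nil => exact absurd rfl hv
    | cons c u => exact ⟨c, u, rfl⟩
  have hb : TensorAlgebra.ι k b = TensorAlgebra.ι k b * word k ([] : List L) := by
    rw [word_nil, mul_one]
  -- expand m (word (c::u)) (ι b) via the recursion
  have hexp : m (word k (c :: u)) (TensorAlgebra.ι k b)
      = TensorAlgebra.ι k c * m (word k u) (TensorAlgebra.ι k b)
        + TensorAlgebra.ι k b * word k (c :: u)
        + TensorAlgebra.ι k (c * b) * word k u := by
    rw [word_cons, hb, hmrec c b u [], word_nil, mul_one, hmur, hmur, ← word_cons]
  have hexp' : m (TensorAlgebra.ι k (a * c) * word k u) (TensorAlgebra.ι k b)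
      = TensorAlgebra.ι k (a * c) * m (word k u) (TensorAlgebra.ι k b)
        + TensorAlgebra.ι k b * (TensorAlgebra.ι k (a * c) * word k u)
        + TensorAlgebra.ι k ((a * c) * b) * word k u := by
    rw [hb, hmrec (a * c) b u [], word_nil, mul_one, hmur, hmur]
  have hDv : D a (word k (c :: u)) = TensorAlgebra.ι k (a * c) * word k u := by
    rw [word_cons]; exact hDw a c u
  have hDbv : D a (word k (b :: c :: u)) = TensorAlgebra.ι k (a * b) * word k (c :: u) := by
    rw [word_cons k b (c :: u)]; exact hDw a b (c :: u)
  rw [hexp, map_add, map_add, hDv, hDbv, hexp']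
  rw [D_mul k D hDw a c (m_word_mem k m hmul hmur hmrec b u)]
  rw [hDw a (c * b) u, hDw a b (c :: u)]
  rw [mul_assoc, mul_comm c b]
  abel
end

section
/- For letters a, b and nonempty words v, w in a quasi-shuffle algebra (k⟨A⟩, *), the identity (a⋄v)*(b⋄w) = a⋄(v*(b⋄w)) + b⋄((a⋄v)*w) − (a⋄b)⋄(v*w) holds. -/
/-!
Quasi-shuffle algebras (Hoffman–Ihara).  We model the span `kA` of the alphabet
(with its commutative associative product `⋄`, written `*` in `L`) as a
non-unital commutative `k`-algebra `L`, and the word algebra `k⟨A⟩` as the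
tensor algebra `TensorAlgebra k L`, in which a word `a₁⋯aₙ` is the product
`ι a₁ * ⋯ * ι aₙ`.
-/

open TensorAlgebra

variable (k : Type*) [Field k]
variable {L : Type*} [NonUnitalCommRing L] [Module k L]
  [SMulCommClass k L L] [IsScalarTower k L L]

/-- The span of words. -/
def Wspan : Submodule k (TensorAlgebra k L) := Submodule.span k (Set.range (word k))

lemma word_mem (u : List L) : word k u ∈ Wspan k :=
  Submodule.subset_span ⟨u, rfl⟩

lemma iota_mul_mem {x : TensorAlgebra k L} (c : L) (hx : x ∈ Wspan k) :
    TensorAlgebra.ι k c * x ∈ Wspan k := by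
  induction hx using Submodule.span_induction with
  | mem y hy =>
      obtain ⟨u, rfl⟩ := hy
      rw [← word_cons]
      exact word_mem k _
  | zero => simp
  | add y z _ _ hy hz => rw [mul_add]; exact add_mem hy hz
  | smul r y _ hy => rw [mul_smul_comm]; exact Submodule.smul_mem _ r hy

lemma m_mem (m : TensorAlgebra k L →ₗ[k] TensorAlgebra k L →ₗ[k] TensorAlgebra k L)
    (hmul : ∀ x, m 1 x = x) (hmur : ∀ x, m x 1 = x)
    (hmrec : ∀ (a b : L) (v w : List L),
      m (TensorAlgebra.ι k a * word k v) (TensorAlgebra.ι k b * word k w)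
        = TensorAlgebra.ι k a * m (word k v) (TensorAlgebra.ι k b * word k w)
          + TensorAlgebra.ι k b * m (TensorAlgebra.ι k a * word k v) (word k w)
          + TensorAlgebra.ι k (a * b) * m (word k v) (word k w)) :
    ∀ (n : ℕ) (v w : List L), v.length + w.length ≤ n →
      m (word k v) (word k w) ∈ Wspan k := by
  intro n
  induction n with
  | zero =>
      rintro v w h
      obtain ⟨rfl, rfl⟩ : v = [] ∧ w = [] := by
        exact ⟨List.length_eq_zero_iff.mp (by omega), List.length_eq_zero_iff.mp (by omega)⟩
      rw [show word k ([] : List L) = 1 from rfl, hmul]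
      exact Submodule.subset_span ⟨[], word_nil k⟩
  | succ n ih =>
      rintro (_ | ⟨c, v⟩) (_ | ⟨d, w⟩) h
      · rw [show word k ([] : List L) = 1 from rfl, hmul]; exact Submodule.subset_span ⟨[], word_nil k⟩
      · rw [show word k ([] : List L) = 1 from rfl, hmul]; exact word_mem k _
      · rw [show word k ([] : List L) = 1 from rfl, hmur]; exact word_mem k _
      · rw [word_cons, word_cons, hmrec]
        simp only [List.length_cons] at h
        refine add_mem (add_mem ?_ ?_) ?_
        · rw [← word_cons]
          exact iota_mul_mem k c (ih v (d :: w) (by simp; omega))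
        · rw [← word_cons]
          exact iota_mul_mem k d (ih (c :: v) w (by simp; omega))
        · exact iota_mul_mem k _ (ih v w (by omega))

lemma D_iota_mul (D : L → TensorAlgebra k L →ₗ[k] TensorAlgebra k L)
    (hDw : ∀ (a c : L) (u : List L),
      D a (TensorAlgebra.ι k c * word k u) = TensorAlgebra.ι k (a * c) * word k u)
    (a c : L) {x : TensorAlgebra k L} (hx : x ∈ Wspan k) :
    D a (TensorAlgebra.ι k c * x) = TensorAlgebra.ι k (a * c) * x := by
  induction hx using Submodule.span_induction with
  | mem y hy => obtain ⟨u, rfl⟩ := hy; exact hDw a c u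
  | zero => simp
  | add y z _ _ hy hz => rw [mul_add, map_add, hy, hz, mul_add]
  | smul r y _ hy => rw [mul_smul_comm, map_smul, hy, mul_smul_comm]

/--
For letters `a, b` and nonempty words `v, w` in a quasi-shuffle
algebra `(k⟨A⟩, *)` (product `m` satisfying the quasi-shuffle recursion, `D a`
the first-letter `⋄`-action):
`(a⋄v)*(b⋄w) = a⋄(v*(b⋄w)) + b⋄((a⋄v)*w) − (a⋄b)⋄(v*w)`.
-/
theorem stmt1
    (m : TensorAlgebra k L →ₗ[k] TensorAlgebra k L →ₗ[k] TensorAlgebra k L)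
    (hmul : ∀ x, m 1 x = x) (hmur : ∀ x, m x 1 = x)
    (hmrec : ∀ (a b : L) (v w : List L),
      m (TensorAlgebra.ι k a * word k v) (TensorAlgebra.ι k b * word k w)
        = TensorAlgebra.ι k a * m (word k v) (TensorAlgebra.ι k b * word k w)
          + TensorAlgebra.ι k b * m (TensorAlgebra.ι k a * word k v) (word k w)
          + TensorAlgebra.ι k (a * b) * m (word k v) (word k w))
    (D : L → TensorAlgebra k L →ₗ[k] TensorAlgebra k L)
    (hD1 : ∀ a : L, D a 1 = 0)
    (hDw : ∀ (a c : L) (u : List L),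
      D a (TensorAlgebra.ι k c * word k u) = TensorAlgebra.ι k (a * c) * word k u) :
    ∀ (a b : L) (v w : List L), v ≠ [] → w ≠ [] →
      m (D a (word k v)) (D b (word k w))
        = D a (m (word k v) (D b (word k w)))
          + D b (m (D a (word k v)) (word k w))
          - D (a * b) (m (word k v) (word k w)) := by
  intro a b v w hv hw
  obtain ⟨c, v, rfl⟩ : ∃ c v', v = c :: v' := by
    cases v with | nil => exact absurd rfl hv | cons c v => exact ⟨c, v, rfl⟩
  obtain ⟨d, w, rfl⟩ : ∃ d w', w = d :: w' := by
    cases w with | nil => exact absurd rfl hw | cons d w => exact ⟨d, w, rfl⟩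
  have hmem : ∀ (v w : List L), m (word k v) (word k w) ∈ Wspan k := fun v w =>
    m_mem k m hmul hmur hmrec (v.length + w.length) v w le_rfl
  have hmemR : ∀ (e : L) (v w : List L),
      m (word k v) (TensorAlgebra.ι k e * word k w) ∈ Wspan k := by
    intro e v w; rw [← word_cons]; exact hmem _ _
  have hmemL : ∀ (e : L) (v w : List L),
      m (TensorAlgebra.ι k e * word k v) (word k w) ∈ Wspan k := by
    intro e v w; rw [← word_cons]; exact hmem _ _
  rw [word_cons, word_cons, hDw, hDw]
  rw [hmrec (a*c) (b*d) v w, hmrec c (b*d) v w, hmrec (a*c) d v w, hmrec c d v w]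
  rw [map_add, map_add, map_add, map_add, map_add, map_add]
  rw [D_iota_mul k D hDw a c (hmemR (b*d) v w),
      D_iota_mul k D hDw a (b*d) (hmemL c v w),
      D_iota_mul k D hDw a (c*(b*d)) (hmem v w),
      D_iota_mul k D hDw b (a*c) (hmemR d v w),
      D_iota_mul k D hDw b d (hmemL (a*c) v w),
      D_iota_mul k D hDw b ((a*c)*d) (hmem v w),
      D_iota_mul k D hDw (a*b) c (hmemR d v w),
      D_iota_mul k D hDw (a*b) d (hmemL c v w),
      D_iota_mul k D hDw (a*b) (c*d) (hmem v w)]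
  have e1 : a * (b * d) = a * b * d := (mul_assoc a b d).symm
  have e2 : b * (a * c) = a * b * c := by rw [← mul_assoc, mul_comm b a]
  have e3 : a * (c * (b * d)) = a * c * (b * d) := (mul_assoc _ _ _).symm
  have e4 : b * (a * c * d) = a * c * (b * d) := by
    rw [← mul_assoc, mul_comm b (a*c), mul_assoc]
  have e5 : a * b * (c * d) = a * c * (b * d) := by
    rw [mul_assoc a b (c*d), ← mul_assoc b c d, mul_comm b c, mul_assoc c b d, ← mul_assoc]
  rw [e1, e2, e3, e4, e5]
  abel
end
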